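/- For any positive reals x and K̂, (√K̂ − √x)·1_{x ≤ K̂} = (1/2)·K̂^(−1/2)·(K̂ − x)⁺ + (1/4)·∫_0^{K̂} K^(−3/2)·(K − x)⁺ dK. -/

import Mathlib

open MeasureTheory

theorem sqrt_put_static_replication
    (x Khat : ℝ) (hx : 0 < x) (hK : 0 < Khat) :
    (if x ≤ Khat then Real.sqrt Khat - Real.sqrt x else 0)
    = (1 / 2) * Khat ^ (-(1 : ℝ) / 2) * max (Khat - x) 0
      + (1 / 4) * ∫ K in (0 : ℝ)..Khat, K ^ (-(3 : ℝ) / 2) * max (K - x) 0 := by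
  by_cases h : x ≤ Khat
  · simp only [h, if_true]
    have hmax : max (Khat - x) 0 = Khat - x := max_eq_left (by linarith)
    have h0x : (0:ℝ) ∉ Set.uIcc x Khat := by
      rw [Set.uIcc_of_le h]
      intro hc
      exact absurd hc.1 (not_le.mpr hx)
    have hint1 : IntervalIntegrable (fun K : ℝ => K ^ (-(1:ℝ)/2)) volume x Khat :=
      intervalIntegral.intervalIntegrable_rpow (Or.inr h0x)
    have hint3 : IntervalIntegrable (fun K : ℝ => K ^ (-(3:ℝ)/2)) volume x Khat :=
      intervalIntegral.intervalIntegrable_rpow (Or.inr h0x)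
    have hae : ∀ K ∈ Set.uIcc x Khat,
        K ^ ((-3:ℝ) / 2) * max (K - x) 0 = K ^ (-(1:ℝ)/2) - x * K ^ (-(3:ℝ)/2) := by
      intro K hKm
      rw [Set.uIcc_of_le h] at hKm
      have hKpos : 0 < K := lt_of_lt_of_le hx hKm.1
      have hm : max (K - x) 0 = K - x := max_eq_left (by linarith [hKm.1])
      rw [hm, mul_sub]
      congr 1
      · rw [← Real.rpow_add_one hKpos.ne' (-3/2)]
        norm_num
      · ring
    have hmain : (∫ K in x..Khat, K ^ (-(3 : ℝ) / 2) * max (K - x) 0)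
        = ∫ K in x..Khat, (K ^ (-(1:ℝ)/2) - x * K ^ (-(3:ℝ)/2)) := by
      apply intervalIntegral.integral_congr
      intro K hKm
      exact hae K hKm
    have hintM : IntervalIntegrable (fun K : ℝ => K ^ (-(3:ℝ)/2) * max (K - x) 0)
        volume x Khat := by
      apply (hint1.sub (hint3.const_mul x)).congr
      intro K hKm
      rw [Set.uIoc_of_le h] at hKm
      exact (hae K (by rw [Set.uIcc_of_le h]; exact ⟨hKm.1.le, hKm.2⟩)).symm
    have hintZ : IntervalIntegrable (fun K : ℝ => K ^ (-(3:ℝ)/2) * max (K - x) 0)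
        volume 0 x := by
      apply (intervalIntegrable_const (c := (0:ℝ))).congr
      intro K hKm
      rw [Set.uIoc_of_le hx.le] at hKm
      have : max (K - x) 0 = 0 := max_eq_right (by linarith [hKm.2])
      simp [this]
    have hzero : (∫ K in (0 : ℝ)..x, K ^ (-(3 : ℝ) / 2) * max (K - x) 0) = 0 := by
      rw [intervalIntegral.integral_congr (g := fun _ => (0:ℝ))]
      · simp
      · intro K hKm
        rw [Set.uIcc_of_le hx.le] at hKm
        have : max (K - x) 0 = 0 := max_eq_right (by linarith [hKm.2])
        simp [this]
    have hsplit : (∫ K in (0 : ℝ)..Khat, K ^ (-(3 : ℝ) / 2) * max (K - x) 0)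
        = ∫ K in x..Khat, K ^ (-(3 : ℝ) / 2) * max (K - x) 0 := by
      rw [← intervalIntegral.integral_add_adjacent_intervals hintZ hintM, hzero, zero_add]
    rw [hmax, hsplit, hmain, intervalIntegral.integral_sub hint1 (hint3.const_mul x),
      intervalIntegral.integral_const_mul,
      integral_rpow (Or.inr ⟨by norm_num, h0x⟩),
      integral_rpow (Or.inr ⟨by norm_num, h0x⟩)]
    have e1 : (-(1:ℝ)/2 + 1) = 1/2 := by norm_num
    have e2 : (-(3:ℝ)/2 + 1) = -((1:ℝ)/2) := by norm_num
    rw [e1, e2, show (-(1:ℝ)/2) = -((1:ℝ)/2) from by norm_num,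
      Real.rpow_neg hK.le, Real.rpow_neg hx.le, ← Real.sqrt_eq_rpow, ← Real.sqrt_eq_rpow]
    have ht : 0 < Real.sqrt Khat := Real.sqrt_pos.mpr hK
    have hs : 0 < Real.sqrt x := Real.sqrt_pos.mpr hx
    have hsx : Real.sqrt x * Real.sqrt x = x := Real.mul_self_sqrt hx.le
    have hKK : Real.sqrt Khat * Real.sqrt Khat = Khat := Real.mul_self_sqrt hK.le
    field_simp
    linear_combination (4*Real.sqrt x)*hKK + (-4*Real.sqrt Khat)*hsx
  · simp only [h, if_false]
    have hmax : max (Khat - x) 0 = 0 := max_eq_right (by linarith [not_le.mp h])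
    have hzero : (∫ K in (0 : ℝ)..Khat, K ^ (-(3 : ℝ) / 2) * max (K - x) 0) = 0 := by
      rw [intervalIntegral.integral_congr (g := fun _ => (0:ℝ))]
      · simp
      · intro K hKm
        rw [Set.uIcc_of_le hK.le] at hKm
        have : max (K - x) 0 = 0 := max_eq_right (by linarith [hKm.2, not_le.mp h])
        simp [this]
    rw [hmax, hzero]
    ring
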